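/- If G is a graph on n vertices with minimum degree δ > n/2, then G contains a cycle of every length l with 3 ≤ l ≤ n (G is pancyclic). -/

import Mathlib

set_option linter.unusedSectionVars false
set_option maxHeartbeats 1600000

open Finset SimpleGraph

section BondyAux

variable {V : Type*} [Fintype V] [DecidableEq V] (G : SimpleGraph V) [DecidableRel G.Adj]

/-- A walk along a chain of adjacent vertices. -/
def chainWalk (f : ℕ → V) : (k : ℕ) → (∀ t, t < k → G.Adj (f t) (f (t+1))) → G.Walk (f 0) (f k)
  | 0, _ => Walk.nil
  | (k+1), h => (chainWalk f k (fun t ht => h t (by omega))).concat (h k (by omega))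

lemma chainWalk_length (f : ℕ → V) (k : ℕ) (h : ∀ t, t < k → G.Adj (f t) (f (t+1))) :
    (chainWalk G f k h).length = k := by
  induction k with
  | zero => rfl
  | succ k ih => simp [chainWalk, Walk.length_concat, ih]

lemma chainWalk_support (f : ℕ → V) (k : ℕ) (h : ∀ t, t < k → G.Adj (f t) (f (t+1))) :
    (chainWalk G f k h).support = (List.range (k+1)).map f := by
  induction k with
  | zero => simp [chainWalk, List.range_succ]
  | succ k ih => simp [chainWalk, Walk.support_concat, ih, List.range_succ]

lemma chainWalk_edges (f : ℕ → V) (k : ℕ) (h : ∀ t, t < k → G.Adj (f t) (f (t+1))) :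
    (chainWalk G f k h).edges = (List.range k).map (fun t => s(f t, f (t+1))) := by
  induction k with
  | zero => rfl
  | succ k ih => simp [chainWalk, Walk.edges_concat, ih, List.range_succ]

lemma cycle_of_chain (f : ℕ → V) (l : ℕ) (hl : 3 ≤ l)
    (hadj : ∀ t, t+1 < l → G.Adj (f t) (f (t+1))) (hcl : G.Adj (f (l-1)) (f 0))
    (hinj : ∀ s t, s < l → t < l → f s = f t → s = t) :
    ∃ (v : V) (w : G.Walk v v), w.IsCycle ∧ w.length = l := by
  have hp : ∀ t, t < l - 1 → G.Adj (f t) (f (t+1)) := fun t ht => hadj t (by omega)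
  set p := chainWalk G f (l-1) hp with hpdef
  have hlen : p.length = l - 1 := chainWalk_length G f (l-1) hp
  refine ⟨f 0, p.concat hcl, ?_, by simp [Walk.length_concat, hlen]; omega⟩
  rw [Walk.isCycle_def]
  refine ⟨?_, ?_, ?_⟩
  · -- IsTrail
    rw [Walk.isTrail_def, Walk.edges_concat, chainWalk_edges]
    rw [List.concat_eq_append, List.nodup_append]
    refine ⟨?_, by simp, ?_⟩
    · rw [List.nodup_map_iff_inj_on List.nodup_range]
      intro a ha b hb hab
      simp only [List.mem_range] at ha hb
      rw [Sym2.eq_iff] at hab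
      rcases hab with ⟨h1, h2⟩ | ⟨h1, h2⟩
      · exact hinj a b (by omega) (by omega) h1
      · have := hinj a (b+1) (by omega) (by omega) h1
        have := hinj (a+1) b (by omega) (by omega) h2
        omega
    · intro e he e' he' hee'
      subst hee'
      simp only [List.mem_map, List.mem_range] at he
      simp only [List.mem_singleton] at he'
      obtain ⟨t, ht, rfl⟩ := he
      rw [Sym2.eq_iff] at he'
      rename' he' => hcontra
      rcases hcontra with ⟨h1, h2⟩ | ⟨h1, h2⟩
      · have := hinj t (l-1) (by omega) (by omega) h1
        have := hinj (t+1) 0 (by omega) (by omega) h2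
        omega
      · have := hinj t 0 (by omega) (by omega) h1
        have := hinj (t+1) (l-1) (by omega) (by omega) h2
        omega
  · -- not nil
    intro hnil
    have : (p.concat hcl).length = 0 := by rw [hnil]; rfl
    rw [Walk.length_concat, hlen] at this
    omega
  · -- support tail nodup
    rw [Walk.support_concat, chainWalk_support]
    have hr : (List.range (l-1+1)).map f = f 0 :: (List.range (l-1)).map (fun t => f (t+1)) := by
      rw [List.range_succ_eq_map]
      simp [Function.comp]
    rw [hr]
    simp only [List.concat_eq_append, List.cons_append, List.tail_cons]
    rw [List.nodup_append]
    refine ⟨?_, by simp, ?_⟩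
    · rw [List.nodup_map_iff_inj_on List.nodup_range]
      intro a ha b hb hab
      simp only [List.mem_range] at ha hb
      have := hinj (a+1) (b+1) (by omega) (by omega) hab
      omega
    · intro x hx y hy
      simp only [List.mem_map, List.mem_range] at hx
      obtain ⟨t, ht, rfl⟩ := hx
      simp only [List.mem_singleton] at hy; subst hy
      intro hcontra
      have := hinj (t+1) 0 (by omega) (by omega) hcontra
      omega

/-- Dirac: under min-degree > n/2, there is a Hamiltonian cycle, presented as a chain. -/
lemma exists_ham_chain (hn : 3 ≤ Fintype.card V)
    (hδ : ∀ v : V, Fintype.card V / 2 + 1 ≤ G.degree v) :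
    ∃ x : ℕ → V,
      (∀ s t, s < Fintype.card V → t < Fintype.card V → x s = x t → s = t) ∧
      (∀ t, t + 1 < Fintype.card V → G.Adj (x t) (x (t+1))) ∧
      G.Adj (x (Fintype.card V - 1)) (x 0) := by
  classical
  set n := Fintype.card V with hndef
  have hV : Nonempty V := Fintype.card_pos_iff.mp (by omega)
  -- path chains
  set P : ℕ → Prop := fun k => ∃ f : ℕ → V,
    (∀ t, t < k → G.Adj (f t) (f (t+1))) ∧
    (∀ s t, s ≤ k → t ≤ k → f s = f t → s = t) with hPdef
  have hP0 : P 0 := ⟨fun _ => Classical.arbitrary V, fun t ht => by omega,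
    fun s t hs ht _ => by omega⟩
  have hPb : ∀ k, P k → k ≤ n - 1 := by
    intro k ⟨f, _, hinj⟩
    have h1 : ((Finset.range (k+1)).image f).card = k + 1 := by
      rw [Finset.card_image_of_injOn, Finset.card_range]
      intro s hs t ht h
      simp only [Finset.mem_coe, Finset.mem_range] at hs ht
      exact hinj s t (by omega) (by omega) h
    have h2 : ((Finset.range (k+1)).image f).card ≤ n := by
      rw [hndef]; exact Finset.card_le_card (Finset.subset_univ _) |>.trans (by simp)
    omega
  set k := Nat.findGreatest P (n-1) with hkdef
  have hPk : P k := Nat.findGreatest_spec (m := 0) (by omega) hP0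
  have hnotPk : ¬ P (k+1) := by
    intro h
    have h1 := hPb _ h
    have h2 : k < k + 1 := by omega
    exact Nat.findGreatest_is_greatest h2 (by omega) h
  have hkb : k ≤ n - 1 := Nat.findGreatest_le _
  obtain ⟨f, hfadj, hfinj⟩ := hPk
  -- head-closure, as a general principle applicable to any maximal chain
  have head_close : ∀ g : ℕ → V,
      (∀ t, t < k → G.Adj (g t) (g (t+1))) →
      (∀ s t, s ≤ k → t ≤ k → g s = g t → s = t) →
      ∀ w, G.Adj w (g 0) → ∃ j, 1 ≤ j ∧ j ≤ k ∧ g j = w := by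
    intro g hadj hinj w hw
    by_contra hcon
    push_neg at hcon
    apply hnotPk
    refine ⟨fun t => if t = 0 then w else g (t-1), ?_, ?_⟩
    · intro t ht
      dsimp only
      by_cases h0 : t = 0
      · subst h0; simpa using hw
      · have : ¬ (t + 1 = 0) := by omega
        rw [if_neg h0, if_neg this]
        have := hadj (t-1) (by omega)
        have he : t - 1 + 1 = t + 1 - 1 := by omega
        rwa [he] at this
    · intro s t hs ht hst
      dsimp only at hst
      by_cases h0 : s = 0 <;> by_cases h1 : t = 0
      · omega
      · exfalso
        rw [if_pos h0, if_neg h1] at hst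
        rcases Nat.eq_or_lt_of_le (show 1 ≤ t by omega) with h | h
        · rw [← h] at hst
          simp only [Nat.sub_self] at hst
          exact (G.ne_of_adj hw) hst
        · exact hcon (t-1) (by omega) (by omega) hst.symm
      · exfalso
        rw [if_neg h0, if_pos h1] at hst
        rcases Nat.eq_or_lt_of_le (show 1 ≤ s by omega) with h | h
        · rw [← h] at hst
          simp only [Nat.sub_self] at hst
          exact (G.ne_of_adj hw) hst.symm
        · exact hcon (s-1) (by omega) (by omega) hst
      · rw [if_neg h0, if_neg h1] at hst
        have := hinj (s-1) (t-1) (by omega) (by omega) hst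
        omega
  -- reversed chain
  set fr : ℕ → V := fun t => f (k - t) with hfrdef
  have hfradj : ∀ t, t < k → G.Adj (fr t) (fr (t+1)) := by
    intro t ht
    have := hfadj (k - t - 1) (by omega)
    have e1 : k - t - 1 + 1 = k - t := by omega
    have e2 : k - (t+1) = k - t - 1 := by omega
    rw [e1] at this
    simp only [hfrdef, e2]
    exact this.symm
  have hfrinj : ∀ s t, s ≤ k → t ≤ k → fr s = fr t → s = t := by
    intro s t hs ht h
    have := hfinj (k-s) (k-t) (by omega) (by omega) h
    omega
  -- neighbors of f 0 and f k occur on the chain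
  have hnb0 : ∀ w, G.Adj w (f 0) → ∃ j, 1 ≤ j ∧ j ≤ k ∧ f j = w :=
    head_close f hfadj hfinj
  have hnbk : ∀ w, G.Adj w (f k) → ∃ j, j ≤ k - 1 ∧ f j = w := by
    intro w hw
    have h0 : fr 0 = f k := by simp [hfrdef]
    obtain ⟨j, hj1, hj2, hj3⟩ := head_close fr hfradj hfrinj w (by rwa [h0])
    exact ⟨k - j, by omega, by simpa [hfrdef] using hj3⟩
  -- index sets
  set A : Finset ℕ := (Finset.range k).filter (fun j => G.Adj (f 0) (f (j+1))) with hAdef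
  set B : Finset ℕ := (Finset.range k).filter (fun j => G.Adj (f j) (f k)) with hBdef
  have hdegA : G.degree (f 0) ≤ A.card := by
    rw [← card_neighborFinset_eq_degree]
    apply Finset.card_le_card_of_injOn
      (fun w => (if h : ∃ j, 1 ≤ j ∧ j ≤ k ∧ f j = w then h.choose else 1) - 1)
    · intro w hw
      rw [Finset.mem_coe, mem_neighborFinset] at hw
      have hex : ∃ j, 1 ≤ j ∧ j ≤ k ∧ f j = w := hnb0 w hw.symm
      beta_reduce
      rw [dif_pos hex]
      obtain ⟨h1, h2, h3⟩ := hex.choose_spec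
      simp only [hAdef, Finset.mem_coe, Finset.mem_filter, Finset.mem_range]
      constructor
      · omega
      · have : hex.choose - 1 + 1 = hex.choose := by omega
        rw [this, h3]; exact hw
    · intro w hw w' hw' hww
      rw [Finset.mem_coe, mem_neighborFinset] at hw hw'
      have hex : ∃ j, 1 ≤ j ∧ j ≤ k ∧ f j = w := hnb0 w hw.symm
      have hex' : ∃ j, 1 ≤ j ∧ j ≤ k ∧ f j = w' := hnb0 w' hw'.symm
      dsimp only at hww
      rw [dif_pos hex, dif_pos hex'] at hww
      obtain ⟨h1, h2, h3⟩ := hex.choose_spec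
      obtain ⟨h1', h2', h3'⟩ := hex'.choose_spec
      have : hex.choose = hex'.choose := by omega
      rw [← h3, ← h3', this]
  have hdegB : G.degree (f k) ≤ B.card := by
    rw [← card_neighborFinset_eq_degree]
    apply Finset.card_le_card_of_injOn
      (fun w => if h : ∃ j, j ≤ k - 1 ∧ f j = w then h.choose else 0)
    · intro w hw
      rw [Finset.mem_coe, mem_neighborFinset] at hw
      have hex : ∃ j, j ≤ k - 1 ∧ f j = w := hnbk w hw.symm
      beta_reduce
      rw [dif_pos hex]
      obtain ⟨h1, h2⟩ := hex.choose_spec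
      simp only [hBdef, Finset.mem_coe, Finset.mem_filter, Finset.mem_range]
      have hk1 : 1 ≤ k := by
        by_contra hc
        have hk0 : k = 0 := by omega
        -- then f 0 = f k, and w = f j with j = 0, so w = f k, contradicting adjacency
        obtain ⟨j, hj, hjw⟩ := hex
        have : j = 0 := by omega
        subst this
        rw [hk0] at hw
        exact (G.ne_of_adj hw) (by rw [← hjw])
      constructor
      · omega
      · rw [h2]; exact hw.symm
    · intro w hw w' hw' hww
      rw [Finset.mem_coe, mem_neighborFinset] at hw hw'
      have hex : ∃ j, j ≤ k - 1 ∧ f j = w := hnbk w hw.symm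
      have hex' : ∃ j, j ≤ k - 1 ∧ f j = w' := hnbk w' hw'.symm
      dsimp only at hww
      rw [dif_pos hex, dif_pos hex'] at hww
      obtain ⟨h1, h3⟩ := hex.choose_spec
      obtain ⟨h1', h3'⟩ := hex'.choose_spec
      rw [← h3, ← h3', hww]
  have hAk : A.card ≤ k := le_trans (Finset.card_filter_le _ _) (by simp)
  have hkdeg : n / 2 + 1 ≤ k := le_trans (hδ (f 0)) (le_trans hdegA hAk)
  -- crossing index
  have hcross : ∃ j, j ∈ A ∩ B := by
    have hu : (A ∪ B).card ≤ k := le_trans (Finset.card_le_card (by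
      intro x hx
      rcases Finset.mem_union.mp hx with h | h
      · exact Finset.mem_of_mem_filter _ h
      · exact Finset.mem_of_mem_filter _ h)) (by simp)
    have hsum : A.card + B.card = (A ∪ B).card + (A ∩ B).card :=
      (Finset.card_union_add_card_inter A B).symm
    have : n + 1 ≤ A.card + B.card := by
      have h1 := hδ (f 0); have h2 := hδ (f k)
      have := le_trans h1 hdegA
      have := le_trans h2 hdegB
      omega
    have : 0 < (A ∩ B).card := by omega
    exact Finset.card_pos.mp this
  obtain ⟨j, hj⟩ := hcross
  rw [Finset.mem_inter] at hj
  obtain ⟨hjA, hjB⟩ := hj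
  rw [hAdef, Finset.mem_filter, Finset.mem_range] at hjA
  rw [hBdef, Finset.mem_filter, Finset.mem_range] at hjB
  obtain ⟨hjk, hA⟩ := hjA
  obtain ⟨_, hB⟩ := hjB
  -- rotation cycle on all k+1 chain vertices
  set cyc : ℕ → V := fun t => if t ≤ j then f t else f (k + j + 1 - t) with hcycdef
  have hcadj : ∀ t, t < k → G.Adj (cyc t) (cyc (t+1)) := by
    intro t ht
    simp only [hcycdef]
    rcases lt_trichotomy t j with h | h | h
    · rw [if_pos (by omega), if_pos (by omega)]
      exact hfadj t (by omega)
    · subst h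
      rw [if_pos (le_refl _), if_neg (by omega)]
      have : k + t + 1 - (t+1) = k := by omega
      rw [this]
      exact hB
    · rw [if_neg (by omega), if_neg (by omega)]
      have e1 : k + j + 1 - t = (k + j - t) + 1 := by omega
      rw [e1]
      have : k + j + 1 - (t + 1) = k + j - t := by omega
      rw [this]
      exact (hfadj (k + j - t) (by omega)).symm
  have hccl : G.Adj (cyc k) (cyc 0) := by
    simp only [hcycdef]
    rw [if_neg (by omega), if_pos (by omega)]
    have : k + j + 1 - k = j + 1 := by omega
    rw [this]
    exact hA.symm
  have hcinj : ∀ s t, s ≤ k → t ≤ k → cyc s = cyc t → s = t := by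
    intro s t hs ht h
    simp only [hcycdef] at h
    by_cases h1 : s ≤ j <;> by_cases h2 : t ≤ j
    · rw [if_pos h1, if_pos h2] at h; exact hfinj s t (by omega) (by omega) h
    · rw [if_pos h1, if_neg h2] at h
      have := hfinj s (k + j + 1 - t) (by omega) (by omega) h
      omega
    · rw [if_neg h1, if_pos h2] at h
      have := hfinj (k + j + 1 - s) t (by omega) (by omega) h
      omega
    · rw [if_neg h1, if_neg h2] at h
      have := hfinj (k + j + 1 - s) (k + j + 1 - t) (by omega) (by omega) h
      omega
  -- if not Hamiltonian, extend
  rcases Nat.eq_or_lt_of_le hkb with hham | hlt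
  · -- k = n - 1
    refine ⟨cyc, ?_, ?_, ?_⟩
    · intro s t hs ht h; exact hcinj s t (by omega) (by omega) h
    · intro t ht; exact hcadj t (by omega)
    · have e : Fintype.card V - 1 = k := by omega
      rw [e]; exact hccl
  · -- k < n - 1 : contradiction
    exfalso
    set S : Finset V := (Finset.range (k+1)).image cyc with hSdef
    have hScard : S.card = k + 1 := by
      rw [hSdef, Finset.card_image_of_injOn, Finset.card_range]
      intro s hs t ht h
      simp only [Finset.mem_coe, Finset.mem_range] at hs ht
      exact hcinj s t (by omega) (by omega) h
    have hSne : S ≠ Finset.univ := by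
      intro h
      have : S.card = n := by rw [h]; simp [hndef]
      omega
    have hcompl : Sᶜ.Nonempty := by
      rw [← Finset.card_pos, Finset.card_compl]
      have : Fintype.card V = n := hndef.symm
      omega
    obtain ⟨w, hw'⟩ := hcompl
    have hw : w ∉ S := Finset.mem_compl.mp hw'
    -- w has a neighbor on the cycle
    have hwnb : ∃ m, m ≤ k ∧ G.Adj w (cyc m) := by
      by_contra hcon
      push_neg at hcon
      have hsub : G.neighborFinset w ⊆ Finset.univ \ (insert w S) := by
        intro u hu
        rw [mem_neighborFinset] at hu
        rw [Finset.mem_sdiff]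
        refine ⟨Finset.mem_univ _, ?_⟩
        rw [Finset.mem_insert]
        push_neg
        refine ⟨fun h => (G.ne_of_adj hu) (by rw [h]), ?_⟩
        intro hc
        rw [hSdef, Finset.mem_image] at hc
        obtain ⟨m, hm, hmu⟩ := hc
        rw [Finset.mem_range] at hm
        exact hcon m (by omega) (by rwa [hmu])
      have h1 : (Finset.univ \ insert w S).card = n - (k + 2) := by
        rw [Finset.card_sdiff_of_subset (Finset.subset_univ _), Finset.card_insert_of_notMem hw, hScard]
        simp [hndef]
      have h2 := Finset.card_le_card hsub
      rw [card_neighborFinset_eq_degree] at h2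
      have h3 := hδ w
      omega
    obtain ⟨m, hm, hwm⟩ := hwnb
    apply hnotPk
    refine ⟨fun t => if t = 0 then w else
      (if m + t ≤ k + 1 then cyc (m + t - 1) else cyc (m + t - 1 - (k+1))), ?_, ?_⟩
    · intro t ht
      dsimp only
      by_cases h0 : t = 0
      · subst h0
        simp only [if_pos rfl, if_neg (Nat.one_ne_zero), if_pos (by omega : m + 1 ≤ k + 1)]
        simpa using hwm
      · rw [if_neg h0, if_neg (by omega : ¬(t + 1 = 0))]
        by_cases h1 : m + t ≤ k
        · rw [if_pos (by omega), if_pos (by omega)]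
          have e : m + (t+1) - 1 = (m + t - 1) + 1 := by omega
          rw [e]
          exact hcadj (m + t - 1) (by omega)
        · by_cases h2 : m + t = k + 1
          · rw [if_pos (by omega), if_neg (by omega)]
            have e1 : m + t - 1 = k := by omega
            have e2 : m + (t+1) - 1 - (k+1) = 0 := by omega
            rw [e1, e2]
            exact hccl
          · rw [if_neg (by omega), if_neg (by omega)]
            have e : m + (t+1) - 1 - (k+1) = (m + t - 1 - (k+1)) + 1 := by omega
            rw [e]
            apply hcadj
            omega
    · intro s t hs ht h
      dsimp only at h
      have hcycmem : ∀ u, u ≤ k → cyc u ∈ S := by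
        intro u hu
        rw [hSdef, Finset.mem_image]
        exact ⟨u, Finset.mem_range.mpr (by omega), rfl⟩
      by_cases h0 : s = 0 <;> by_cases h1 : t = 0
      · omega
      · exfalso
        rw [if_pos h0, if_neg h1] at h
        by_cases h2 : m + t ≤ k + 1
        · rw [if_pos h2] at h; exact hw (h ▸ hcycmem _ (by omega))
        · rw [if_neg h2] at h; exact hw (h ▸ hcycmem _ (by omega))
      · exfalso
        rw [if_neg h0, if_pos h1] at h
        by_cases h2 : m + s ≤ k + 1
        · rw [if_pos h2] at h; exact hw (h.symm ▸ hcycmem _ (by omega))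
        · rw [if_neg h2] at h; exact hw (h.symm ▸ hcycmem _ (by omega))
      · rw [if_neg h0, if_neg h1] at h
        by_cases h2 : m + s ≤ k + 1 <;> by_cases h3 : m + t ≤ k + 1
        · rw [if_pos h2, if_pos h3] at h
          have := hcinj _ _ (by omega) (by omega) h
          omega
        · rw [if_pos h2, if_neg h3] at h
          have := hcinj _ _ (by omega) (by omega) h
          omega
        · rw [if_neg h2, if_pos h3] at h
          have := hcinj _ _ (by omega) (by omega) h
          omega
        · rw [if_neg h2, if_neg h3] at h
          have := hcinj _ _ (by omega) (by omega) h
          omega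

lemma no_cycle_pair {n l : ℕ} (hn : 3 ≤ n) (hl3 : 3 ≤ l) (hln : l + 1 ≤ n)
    (X : ZMod n → V) (hXinj : Function.Injective X)
    (hXadj : ∀ z : ZMod n, G.Adj (X z) (X (z + 1)))
    (hno : ¬ ∃ (v : V) (w : G.Walk v v), w.IsCycle ∧ w.length = l)
    (u b : ℕ) (hu1 : 1 ≤ u) (hu2 : u + l + 1 ≤ n + 2) (hb : b ≤ l - 2)
    (i : ZMod n) :
    ¬ (G.Adj (X i) (X (i + ((u + b : ℕ) : ZMod n))) ∧
       G.Adj (X (i + ((u : ℕ) : ZMod n)))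
             (X (i + ((u : ℕ) : ZMod n) + (((n - l + 2 - u) + b : ℕ) : ZMod n)))) := by
  haveI : NeZero n := ⟨by omega⟩
  rintro ⟨h1, h2⟩
  set K : ℕ := n - l + 2 with hK
  set a : ℕ := l - 2 - b with ha
  set g : ℕ → ℕ := fun t => if t = 0 then 0 else if t ≤ b + 1 then u + b + 1 - t else t + K - 2
    with hg
  have hglt : ∀ t, t < l → g t < n := by
    intro t ht
    simp only [hg]
    split <;> rename_i h
    · omega
    · split <;> omega
  have hcast : ∀ c1 c2 : ℕ, c1 < n → c2 < n → ((c1 : ZMod n) = (c2 : ZMod n)) → c1 = c2 := by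
    intro c1 c2 hc1 hc2 h
    have := congrArg ZMod.val h
    rwa [ZMod.val_natCast_of_lt hc1, ZMod.val_natCast_of_lt hc2] at this
  set f : ℕ → V := fun t => X (i + ((g t : ℕ) : ZMod n)) with hf
  apply hno
  apply cycle_of_chain G f l hl3
  · -- adjacency
    intro t ht
    simp only [hf]
    by_cases h0 : t = 0
    · subst h0
      have e0 : g 0 = 0 := by simp [hg]
      have e1 : g 1 = u + b := by
        simp only [hg, if_neg one_ne_zero, if_pos (by omega : 1 ≤ b+1)]
        omega
      rw [e0, e1]
      simpa using h1
    · by_cases hb1 : t ≤ b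
      · -- descending part: g t = u+b+1-t, g (t+1) = u+b-t
        have e0 : g t = (u + b - t) + 1 := by simp only [hg, if_neg h0, if_pos (by omega : t ≤ b+1)]; omega
        have e1 : g (t+1) = u + b - t := by
          simp only [hg, if_neg (by omega : ¬(t+1 = 0)), if_pos (by omega : t+1 ≤ b+1)]
          omega
        rw [e0, e1]
        have := hXadj (i + ((u + b - t : ℕ) : ZMod n))
        have ecast : i + (((u + b - t) + 1 : ℕ) : ZMod n)
            = i + ((u + b - t : ℕ) : ZMod n) + 1 := by push_cast; ring
        rw [ecast]
        exact this.symm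
      · by_cases hb2 : t = b + 1
        · -- chord 2
          subst hb2
          have e0 : g (b+1) = u := by
            simp only [hg, if_neg (by omega : ¬(b+1 = 0)), if_pos (le_refl _)]
            omega
          have e1 : g (b+2) = K + b := by
            simp only [hg, if_neg (by omega : ¬(b+2 = 0)), if_neg (by omega : ¬(b+2 ≤ b+1))]
            omega
          rw [show b+1+1 = b+2 from rfl, e0, e1]
          have ecast : i + ((K + b : ℕ) : ZMod n)
              = i + ((u : ℕ) : ZMod n) + (((K - u) + b : ℕ) : ZMod n) := by
            have : ((K + b : ℕ) : ZMod n) = ((u : ℕ) : ZMod n) + (((K - u) + b : ℕ) : ZMod n) := by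
              rw [← Nat.cast_add]
              congr 1
              omega
            rw [this]; ring
          rw [ecast]
          exact h2
        · -- ascending part
          have e0 : g t = t + K - 2 := by
            simp only [hg, if_neg h0, if_neg (by omega : ¬(t ≤ b+1))]
          have e1 : g (t+1) = (t + K - 2) + 1 := by
            simp only [hg, if_neg (by omega : ¬(t+1 = 0)), if_neg (by omega : ¬(t+1 ≤ b+1))]
            omega
          rw [e0, e1]
          have := hXadj (i + ((t + K - 2 : ℕ) : ZMod n))
          have ecast : i + (((t + K - 2) + 1 : ℕ) : ZMod n)
              = i + ((t + K - 2 : ℕ) : ZMod n) + 1 := by push_cast; ring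
          rw [ecast]
          exact this
  · -- closing edge
    simp only [hf]
    by_cases haz : a = 0
    · -- l - 1 = b + 1, closing via chord 2
      have e0 : g (l-1) = u := by
        simp only [hg, if_neg (by omega : ¬(l-1 = 0)), if_pos (by omega : l-1 ≤ b+1)]
        omega
      have e1 : g 0 = 0 := by simp [hg]
      rw [e0, e1]
      have ecast : i + ((0 : ℕ) : ZMod n)
          = i + ((u : ℕ) : ZMod n) + (((K - u) + b : ℕ) : ZMod n) := by
        rw [add_assoc, ← Nat.cast_add, show u + ((K-u)+b) = n by omega, ZMod.natCast_self,
          Nat.cast_zero, add_zero]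
      rw [ecast]
      exact h2
    · -- closing via the Hamilton cycle edge from position n-1 to 0
      have e0 : g (l-1) = n - 1 := by
        simp only [hg, if_neg (by omega : ¬(l-1 = 0)), if_neg (by omega : ¬(l-1 ≤ b+1))]
        omega
      have e1 : g 0 = 0 := by simp [hg]
      rw [e0, e1]
      have := hXadj (i + ((n - 1 : ℕ) : ZMod n))
      have ecast : i + ((0 : ℕ) : ZMod n) = i + ((n - 1 : ℕ) : ZMod n) + 1 := by
        have h3 : i + ((n - 1 : ℕ) : ZMod n) + 1 = i + (((n-1) + 1 : ℕ) : ZMod n) := by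
          push_cast; ring
        rw [h3, show (n-1) + 1 = n by omega, ZMod.natCast_self, Nat.cast_zero, add_zero]
      rw [ecast]
      exact this
  · -- injectivity
    intro s t hs ht h
    simp only [hf] at h
    have h' := hXinj h
    have h'' := add_left_cancel h'
    have hgeq := hcast (g s) (g t) (hglt s hs) (hglt t ht) h''
    have gchar : ∀ r, (r = 0 ∧ g r = 0) ∨ (1 ≤ r ∧ r ≤ b+1 ∧ g r = u+b+1-r) ∨
        (b+2 ≤ r ∧ g r = r+K-2) := by
      intro r
      by_cases hr0 : r = 0
      · left; exact ⟨hr0, by simp [hg, hr0]⟩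
      · by_cases hr1 : r ≤ b+1
        · right; left
          exact ⟨by omega, hr1, by simp only [hg, if_neg hr0, if_pos hr1]⟩
        · right; right
          exact ⟨by omega, by simp only [hg, if_neg hr0, if_neg hr1]⟩
    rcases gchar s with ⟨e1, e2⟩ | ⟨e1, e2, e3⟩ | ⟨e1, e2⟩ <;>
      rcases gchar t with ⟨d1, d2⟩ | ⟨d1, d2, d3⟩ | ⟨d1, d2⟩ <;>
      omega

end BondyAux

/-- Telescoping bound: consecutive-pair bounds control twice the sum over an interval. -/
lemma tele_bound (R : ℕ → ℕ) (N a m : ℕ)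
    (hRle : ∀ t, R t ≤ N)
    (hbound : ∀ t, a ≤ t → t + 1 + 1 ≤ m → R t + R (t+1) ≤ N) :
    2 * ∑ t ∈ Finset.Ico a m, R t ≤ N * (m - a + 1) := by
  rcases Nat.lt_or_ge a m with h | h
  · rcases Nat.eq_or_lt_of_le h with h1 | h1
    · -- m = a + 1
      have : Finset.Ico a m = {a} := by
        rw [show m = a + 1 by omega, Finset.Ico_add_one_right_eq_Icc, Finset.Icc_self]
      rw [this, Finset.sum_singleton]
      have := hRle a
      have e : m - a + 1 = 2 := by omega
      rw [e]; omega
    · -- a + 1 < m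
      have e1 : ∑ t ∈ Finset.Ico a m, R t
          = R a + ∑ t ∈ Finset.Ico (a+1) m, R t :=
        Finset.sum_eq_sum_Ico_succ_bot h _
      have e2 : ∑ t ∈ Finset.Ico a ((m-1)+1), R t
          = (∑ t ∈ Finset.Ico a (m-1), R t) + R (m-1) :=
        Finset.sum_Ico_succ_top (by omega) _
      rw [show (m-1)+1 = m by omega] at e2
      have e3 : ∑ t ∈ Finset.Ico (a+1) ((m-1)+1), R t
          = ∑ t ∈ Finset.Ico a (m-1), R (t+1) := by
        rw [← Finset.map_add_right_Ico a (m-1) 1, Finset.sum_map]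
        simp [addRightEmbedding_apply]
      rw [show (m-1)+1 = m by omega] at e3
      have e4 : ∑ t ∈ Finset.Ico a (m-1), (R t + R (t+1))
          = (∑ t ∈ Finset.Ico a (m-1), R t) + ∑ t ∈ Finset.Ico a (m-1), R (t+1) :=
        Finset.sum_add_distrib
      have e5 : ∑ t ∈ Finset.Ico a (m-1), (R t + R (t+1)) ≤ N * (m - 1 - a) := by
        calc ∑ t ∈ Finset.Ico a (m-1), (R t + R (t+1))
            ≤ ∑ _t ∈ Finset.Ico a (m-1), N := by
              apply Finset.sum_le_sum
              intro t ht
              rw [Finset.mem_Ico] at ht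
              exact hbound t ht.1 (by omega)
          _ = N * (m - 1 - a) := by
              rw [Finset.sum_const, Nat.card_Ico, smul_eq_mul, mul_comm]
      have h6 := hRle a
      have h7 := hRle (m-1)
      have harith : N * (m - a + 1) = N * (m-1-a) + 2*N := by
        rw [show m - a + 1 = (m-1-a) + 2 by omega]
        ring
      omega
  · have : Finset.Ico a m = ∅ := Finset.Ico_eq_empty (by omega)
    rw [this, Finset.sum_empty]
    omega

/-- The central counting lemma. -/
lemma counting_main {n l K : ℕ} (R : ℕ → ℕ) (hn : 3 ≤ n) (hl3 : 3 ≤ l) (hln : l + 1 ≤ n)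
    (hK : K = n - l + 2)
    (hRle : ∀ ρ, R ρ ≤ n)
    (hrefl : ∀ ρ, 1 ≤ ρ → ρ ≤ n-1 → R ρ = R (n - ρ))
    (hpair : ∀ ρ1 ρ2, 1 ≤ ρ1 → 1 ≤ ρ2 → K ≤ ρ1 + ρ2 → ρ1 + ρ2 ≤ n + l - 2 →
      (ρ1 + ρ2 - K) % 2 = 0 → ρ1 ≤ ρ2 + (K-2) → ρ2 ≤ ρ1 + (K-2) → R ρ1 + R ρ2 ≤ n) :
    2 * (∑ ρ ∈ Finset.Ico 1 n, R ρ) ≤ n * n := by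
  have hK3 : 3 ≤ K := by omega
  -- shift reindex helper
  have hshift : ∀ a b c : ℕ, ∑ t ∈ Finset.Ico a b, R (t + c)
      = ∑ ρ ∈ Finset.Ico (a+c) (b+c), R ρ := by
    intro a b c
    rw [← Finset.map_add_right_Ico a b c, Finset.sum_map]
    simp [addRightEmbedding_apply]
  rcases Nat.lt_or_ge (2*l) (n+2) with hcase | hcase
  · -- CASE I : 2l ≤ n+1
    have hsplit1 : (∑ ρ ∈ Finset.Ico 1 l, R ρ) + (∑ ρ ∈ Finset.Ico l (K-1), R ρ)
        = ∑ ρ ∈ Finset.Ico 1 (K-1), R ρ :=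
      Finset.sum_Ico_consecutive R (show (1:ℕ) ≤ l by omega) (show l ≤ K-1 by omega)
    have hsplit2 : (∑ ρ ∈ Finset.Ico 1 (K-1), R ρ) + (∑ ρ ∈ Finset.Ico (K-1) n, R ρ)
        = ∑ ρ ∈ Finset.Ico 1 n, R ρ :=
      Finset.sum_Ico_consecutive R (show (1:ℕ) ≤ K-1 by omega) (show K-1 ≤ n by omega)
    have hre : ∑ ρ ∈ Finset.Ico (K-1) n, R ρ = ∑ t ∈ Finset.Ico 1 l, R (t + (K-2)) := by
      have h := hshift 1 l (K-2)
      rw [show 1+(K-2) = K-1 by omega, show l+(K-2) = n by omega] at h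
      exact h.symm
    have hpairsum : (∑ t ∈ Finset.Ico 1 l, R t) + (∑ t ∈ Finset.Ico 1 l, R (t + (K-2)))
        ≤ n * (l - 1) := by
      calc (∑ t ∈ Finset.Ico 1 l, R t) + (∑ t ∈ Finset.Ico 1 l, R (t + (K-2)))
          = ∑ t ∈ Finset.Ico 1 l, (R t + R (t + (K-2))) := Finset.sum_add_distrib.symm
        _ ≤ ∑ _t ∈ Finset.Ico 1 l, n := by
            apply Finset.sum_le_sum
            intro t ht
            rw [Finset.mem_Ico] at ht
            apply hpair t (t + (K-2)) (by omega) (by omega) (by omega) (by omega)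
              (by omega) (by omega) (by omega)
        _ = n * (l - 1) := by rw [Finset.sum_const, Nat.card_Ico, smul_eq_mul, mul_comm]
    -- middle
    rcases Nat.even_or_odd l with hpar | hpar
    · -- l even : middle rows are halved
      have hmid : ∀ t, l ≤ t → t < K-1 → 2 * R t ≤ n := by
        intro t h1 h2
        have hne : R t + R (n - t) ≤ n := by
          apply hpair t (n-t) (by omega) (by omega) (by omega) (by omega) ?_ (by omega) (by omega)
          obtain ⟨c, hc⟩ := hpar
          omega
        have := hrefl t (by omega) (by omega)
        omega
      have hmids : 2 * ∑ t ∈ Finset.Ico l (K-1), R t ≤ n * (K - 1 - l) := by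
        calc 2 * ∑ t ∈ Finset.Ico l (K-1), R t
            = ∑ t ∈ Finset.Ico l (K-1), 2 * R t := by rw [Finset.mul_sum]
          _ ≤ ∑ _t ∈ Finset.Ico l (K-1), n := by
              apply Finset.sum_le_sum
              intro t ht
              rw [Finset.mem_Ico] at ht
              exact hmid t ht.1 ht.2
          _ = n * (K - 1 - l) := by rw [Finset.sum_const, Nat.card_Ico, smul_eq_mul, mul_comm]
      have hfin : 2 * (∑ ρ ∈ Finset.Ico 1 n, R ρ) ≤ 2 * (n * (l-1)) + n * (K-1-l) := by omega
      calc 2 * (∑ ρ ∈ Finset.Ico 1 n, R ρ) ≤ 2 * (n * (l-1)) + n * (K-1-l) := hfin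
        _ ≤ n * n := by
            have : 2 * (l-1) + (K-1-l) ≤ n := by omega
            calc 2 * (n * (l-1)) + n * (K-1-l) = n * (2*(l-1) + (K-1-l)) := by ring
              _ ≤ n * n := Nat.mul_le_mul_left n this
    · -- l odd: consecutive pairs in the middle
      have hmid : ∀ t, l ≤ t → t + 1 + 1 ≤ K-1 → R t + R (t+1) ≤ n := by
        intro t h1 h2
        have hne : R t + R (n - (t+1)) ≤ n := by
          apply hpair t (n-(t+1)) (by omega) (by omega) (by omega) (by omega) ?_
            (by omega) (by omega)
          obtain ⟨c, hc⟩ := hpar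
          omega
        have := hrefl (t+1) (by omega) (by omega)
        omega
      have hmids := tele_bound R n l (K-1) hRle hmid
      have hfin : 2 * (∑ ρ ∈ Finset.Ico 1 n, R ρ) ≤ 2 * (n * (l-1)) + n * (K-1-l+1) := by omega
      calc 2 * (∑ ρ ∈ Finset.Ico 1 n, R ρ) ≤ 2 * (n * (l-1)) + n * (K-1-l+1) := hfin
        _ ≤ n * n := by
            have : 2 * (l-1) + (K-1-l+1) ≤ n := by omega
            calc 2 * (n * (l-1)) + n * (K-1-l+1) = n * (2*(l-1) + (K-1-l+1)) := by ring
              _ ≤ n * n := Nat.mul_le_mul_left n this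
  · rcases Nat.eq_or_lt_of_le hcase with hcase2 | hcase2
    · -- CASE I' : 2l = n+2, K = l
      have hKl : K = l := by omega
      have hsplit1 : (∑ ρ ∈ Finset.Ico 1 2, R ρ) + (∑ ρ ∈ Finset.Ico 2 l, R ρ)
          = ∑ ρ ∈ Finset.Ico 1 l, R ρ :=
        Finset.sum_Ico_consecutive R (show (1:ℕ) ≤ 2 by omega) (show 2 ≤ l by omega)
      have hsplit2 : (∑ ρ ∈ Finset.Ico 1 l, R ρ) + (∑ ρ ∈ Finset.Ico l n, R ρ)
          = ∑ ρ ∈ Finset.Ico 1 n, R ρ :=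
        Finset.sum_Ico_consecutive R (show (1:ℕ) ≤ l by omega) (show l ≤ n by omega)
      have hre : ∑ ρ ∈ Finset.Ico l n, R ρ = ∑ t ∈ Finset.Ico 2 l, R (t + (l-2)) := by
        have h := hshift 2 l (l-2)
        rw [show 2+(l-2) = l by omega, show l+(l-2) = n by omega] at h
        exact h.symm
      have hpairsum : (∑ t ∈ Finset.Ico 2 l, R t) + (∑ t ∈ Finset.Ico 2 l, R (t + (l-2)))
          ≤ n * (l - 2) := by
        calc (∑ t ∈ Finset.Ico 2 l, R t) + (∑ t ∈ Finset.Ico 2 l, R (t + (l-2)))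
            = ∑ t ∈ Finset.Ico 2 l, (R t + R (t + (l-2))) := Finset.sum_add_distrib.symm
          _ ≤ ∑ _t ∈ Finset.Ico 2 l, n := by
              apply Finset.sum_le_sum
              intro t ht
              rw [Finset.mem_Ico] at ht
              apply hpair t (t + (l-2)) (by omega) (by omega) (by omega) (by omega)
                (by omega) (by omega) (by omega)
          _ = n * (l - 2) := by rw [Finset.sum_const, Nat.card_Ico, smul_eq_mul, mul_comm]
      have h1 : ∑ ρ ∈ Finset.Ico 1 2, R ρ ≤ n := by
        rw [show (2:ℕ) = 1 + 1 from rfl, Finset.Ico_add_one_right_eq_Icc, Finset.Icc_self, Finset.sum_singleton]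
        exact hRle 1
      have : 2 * (∑ ρ ∈ Finset.Ico 1 n, R ρ) ≤ 2*n + 2*(n * (l-2)) := by omega
      calc 2 * (∑ ρ ∈ Finset.Ico 1 n, R ρ) ≤ 2*n + 2*(n*(l-2)) := this
        _ = n * (2 + 2*(l-2)) := by ring
        _ ≤ n * n := Nat.mul_le_mul_left n (by omega)
    · -- CASE II : 2l ≥ n+3, so 2K ≤ n+1
      have h2K : 2*K ≤ n+1 := by omega
      have hsplit1 : (∑ ρ ∈ Finset.Ico 1 K, R ρ) + (∑ ρ ∈ Finset.Ico K (n-K+1), R ρ)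
          = ∑ ρ ∈ Finset.Ico 1 (n-K+1), R ρ :=
        Finset.sum_Ico_consecutive R (show (1:ℕ) ≤ K by omega) (show K ≤ n-K+1 by omega)
      have hsplit2 : (∑ ρ ∈ Finset.Ico 1 (n-K+1), R ρ) + (∑ ρ ∈ Finset.Ico (n-K+1) n, R ρ)
          = ∑ ρ ∈ Finset.Ico 1 n, R ρ :=
        Finset.sum_Ico_consecutive R (show (1:ℕ) ≤ n-K+1 by omega) (show n-K+1 ≤ n by omega)
      -- bottom mirror
      have hbot : 2 * ∑ t ∈ Finset.Ico 1 K, R t ≤ n * (K-1) := by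
        have hmirror : ∑ t ∈ Finset.Ico 1 K, R t = ∑ t ∈ Finset.Ico 1 K, R (K - t) := by
          apply Finset.sum_nbij' (fun t => K - t) (fun t => K - t)
          · intro t ht; rw [Finset.mem_Ico] at *; omega
          · intro t ht; rw [Finset.mem_Ico] at *; omega
          · intro t ht; rw [Finset.mem_Ico] at ht; omega
          · intro t ht; rw [Finset.mem_Ico] at ht; omega
          · intro t ht; rw [Finset.mem_Ico] at ht
            congr 1
            omega
        calc 2 * ∑ t ∈ Finset.Ico 1 K, R t
            = (∑ t ∈ Finset.Ico 1 K, R t) + ∑ t ∈ Finset.Ico 1 K, R (K - t) := by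
              rw [← hmirror]; ring
          _ = ∑ t ∈ Finset.Ico 1 K, (R t + R (K - t)) := Finset.sum_add_distrib.symm
          _ ≤ ∑ _t ∈ Finset.Ico 1 K, n := by
              apply Finset.sum_le_sum
              intro t ht
              rw [Finset.mem_Ico] at ht
              apply hpair t (K-t) (by omega) (by omega) (by omega) (by omega)
                (by omega) (by omega) (by omega)
          _ = n * (K-1) := by rw [Finset.sum_const, Nat.card_Ico, smul_eq_mul, mul_comm]
      -- top mirror
      have htop : 2 * ∑ t ∈ Finset.Ico (n-K+1) n, R t ≤ n * (K-1) := by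
        have hmirror : ∑ t ∈ Finset.Ico (n-K+1) n, R t
            = ∑ t ∈ Finset.Ico (n-K+1) n, R (2*n - K - t) := by
          apply Finset.sum_nbij' (fun t => 2*n - K - t) (fun t => 2*n - K - t)
          · intro t ht; rw [Finset.mem_Ico] at *; omega
          · intro t ht; rw [Finset.mem_Ico] at *; omega
          · intro t ht; rw [Finset.mem_Ico] at ht; omega
          · intro t ht; rw [Finset.mem_Ico] at ht; omega
          · intro t ht; rw [Finset.mem_Ico] at ht
            congr 1
            omega
        calc 2 * ∑ t ∈ Finset.Ico (n-K+1) n, R t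
            = (∑ t ∈ Finset.Ico (n-K+1) n, R t) + ∑ t ∈ Finset.Ico (n-K+1) n, R (2*n-K-t) := by
              rw [← hmirror]; ring
          _ = ∑ t ∈ Finset.Ico (n-K+1) n, (R t + R (2*n-K-t)) := Finset.sum_add_distrib.symm
          _ ≤ ∑ _t ∈ Finset.Ico (n-K+1) n, n := by
              apply Finset.sum_le_sum
              intro t ht
              rw [Finset.mem_Ico] at ht
              apply hpair t (2*n-K-t) (by omega) (by omega) (by omega) (by omega)
                (by omega) (by omega) (by omega)
          _ = n * (K-1) := by
              rw [Finset.sum_const, Nat.card_Ico, smul_eq_mul, mul_comm]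
              congr 1
              omega
      -- middle
      rcases Nat.even_or_odd K with hpar | hpar
      · have hmid : ∀ t, K ≤ t → t < n-K+1 → 2 * R t ≤ n := by
          intro t h1 h2
          have := hpair t t (by omega) (by omega) (by omega) (by omega) ?_ (by omega) (by omega)
          · omega
          · obtain ⟨c, hc⟩ := hpar
            omega
        have hmids : 2 * ∑ t ∈ Finset.Ico K (n-K+1), R t ≤ n * (n-K+1-K) := by
          calc 2 * ∑ t ∈ Finset.Ico K (n-K+1), R t
              = ∑ t ∈ Finset.Ico K (n-K+1), 2 * R t := by rw [Finset.mul_sum]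
            _ ≤ ∑ _t ∈ Finset.Ico K (n-K+1), n := by
                apply Finset.sum_le_sum
                intro t ht
                rw [Finset.mem_Ico] at ht
                exact hmid t ht.1 ht.2
            _ = n * (n-K+1-K) := by rw [Finset.sum_const, Nat.card_Ico, smul_eq_mul, mul_comm]
        have : 2 * (∑ ρ ∈ Finset.Ico 1 n, R ρ) ≤ n*(K-1) + n*(K-1) + n*(n-K+1-K) := by omega
        calc 2 * (∑ ρ ∈ Finset.Ico 1 n, R ρ) ≤ n*(K-1) + n*(K-1) + n*(n-K+1-K) := this
          _ = n * ((K-1) + (K-1) + (n-K+1-K)) := by ring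
          _ ≤ n * n := Nat.mul_le_mul_left n (by omega)
      · have hmid : ∀ t, K ≤ t → t + 1 + 1 ≤ n-K+1 → R t + R (t+1) ≤ n := by
          intro t h1 h2
          apply hpair t (t+1) (by omega) (by omega) (by omega) (by omega) ?_ (by omega) (by omega)
          obtain ⟨c, hc⟩ := hpar
          omega
        have hmids := tele_bound R n K (n-K+1) hRle hmid
        have : 2 * (∑ ρ ∈ Finset.Ico 1 n, R ρ) ≤ n*(K-1) + n*(K-1) + n*(n-K+1-K+1) := by omega
        calc 2 * (∑ ρ ∈ Finset.Ico 1 n, R ρ) ≤ n*(K-1) + n*(K-1) + n*(n-K+1-K+1) := this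
          _ = n * ((K-1) + (K-1) + (n-K+1-K+1)) := by ring
          _ ≤ n * n := Nat.mul_le_mul_left n (by omega)

/-- **Bondy.** If `G` is a graph on `n` vertices with minimum degree `δ > n/2`, then
`G` contains a cycle of every length `l` with `3 ≤ l ≤ n`. -/
theorem bondy_pancyclic {V : Type*} [Fintype V] [DecidableEq V] [Nonempty V]
    (G : SimpleGraph V) [DecidableRel G.Adj]
    (hδ : (Fintype.card V : ℝ) / 2 < (G.minDegree : ℝ)) :
    ∀ l : ℕ, 3 ≤ l → l ≤ Fintype.card V →
      ∃ (v : V) (w : G.Walk v v), w.IsCycle ∧ w.length = l := by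
  intro l hl3 hln
  classical
  set n := Fintype.card V with hndef
  have hn : 3 ≤ n := le_trans hl3 hln
  haveI : NeZero n := ⟨by omega⟩
  -- degree bound
  have hmd : n < 2 * G.minDegree := by
    have h2 : (n : ℝ) < 2 * (G.minDegree : ℝ) := by linarith
    exact_mod_cast h2
  have hdeg : ∀ v : V, n / 2 + 1 ≤ G.degree v := by
    intro v
    have h1 := G.minDegree_le_degree v
    omega
  -- Hamiltonian chain
  obtain ⟨cyc, hcinj, hcadj, hccl⟩ := exists_ham_chain G hn hdeg
  -- package as ZMod n chain
  set X : ZMod n → V := fun z => cyc z.val with hXdef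
  have hvlt : ∀ z : ZMod n, z.val < n := fun z => ZMod.val_lt z
  have hXinj : Function.Injective X := by
    intro z z' h
    have := hcinj z.val z'.val (hvlt z) (hvlt z') h
    exact ZMod.val_injective n this
  have hXadj : ∀ z : ZMod n, G.Adj (X z) (X (z + 1)) := by
    intro z
    haveI : Fact (1 < n) := ⟨by omega⟩
    have hval : (z + 1).val = (z.val + 1) % n := by
      rw [ZMod.val_add, ZMod.val_one]
    by_cases h : z.val + 1 < n
    · have : (z + 1).val = z.val + 1 := by rw [hval, Nat.mod_eq_of_lt h]
      rw [hXdef]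
      simp only
      rw [this]
      exact hcadj z.val h
    · have hz : z.val = n - 1 := by have := hvlt z; omega
      have : (z + 1).val = 0 := by rw [hval, hz, show n - 1 + 1 = n by omega, Nat.mod_self]
      rw [hXdef]
      simp only
      rw [this, hz]
      exact hccl
  have hXbij : Function.Bijective X := by
    rw [Fintype.bijective_iff_injective_and_card]
    exact ⟨hXinj, by rw [ZMod.card]⟩
  have hcast : ∀ c1 c2 : ℕ, c1 < n → c2 < n → ((c1 : ZMod n) = (c2 : ZMod n)) → c1 = c2 := by
    intro c1 c2 hc1 hc2 h
    have := congrArg ZMod.val h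
    rwa [ZMod.val_natCast_of_lt hc1, ZMod.val_natCast_of_lt hc2] at this
  rcases Nat.eq_or_lt_of_le hln with hleq | hllt
  · -- l = n : the Hamiltonian cycle itself
    apply cycle_of_chain G cyc l hl3
    · intro t ht; exact hcadj t (by omega)
    · rw [show l - 1 = n - 1 by omega]
      exact hccl
    · intro s t hs ht h; exact hcinj s t (by omega) (by omega) h
  · -- l < n : counting argument
    by_contra hno
    set K : ℕ := n - l + 2 with hK
    set R : ℕ → ℕ := fun ρ =>
      ((Finset.univ : Finset (ZMod n)).filter (fun i => G.Adj (X i) (X (i + ((ρ : ℕ) : ZMod n))))).card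
      with hRdef
    have hRle : ∀ ρ, R ρ ≤ n := by
      intro ρ
      calc R ρ ≤ (Finset.univ : Finset (ZMod n)).card := Finset.card_filter_le _ _
        _ = n := by rw [Finset.card_univ, ZMod.card]
    have hrefl : ∀ ρ, 1 ≤ ρ → ρ ≤ n-1 → R ρ = R (n - ρ) := by
      intro ρ h1 h2
      rw [hRdef]
      apply Finset.card_nbij' (fun i => i + ((ρ:ℕ) : ZMod n)) (fun i => i - ((ρ:ℕ) : ZMod n))
      · intro i hi
        beta_reduce
        rw [Finset.mem_coe, Finset.mem_filter] at hi ⊢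
        refine ⟨Finset.mem_univ _, ?_⟩
        have he : i + ((ρ:ℕ) : ZMod n) + (((n - ρ : ℕ)) : ZMod n) = i := by
          rw [add_assoc, ← Nat.cast_add, show ρ + (n - ρ) = n by omega, ZMod.natCast_self, add_zero]
        rw [he]
        exact hi.2.symm
      · intro i hi
        beta_reduce
        rw [Finset.mem_coe, Finset.mem_filter] at hi ⊢
        refine ⟨Finset.mem_univ _, ?_⟩
        have he : i - ((ρ:ℕ) : ZMod n) + ((ρ:ℕ) : ZMod n) = i := by ring
        have he2 : i + (((n - ρ : ℕ)) : ZMod n) = i - ((ρ:ℕ) : ZMod n) := by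
          have : (((n - ρ : ℕ)) : ZMod n) = ((n:ℕ) : ZMod n) - ((ρ:ℕ) : ZMod n) := by
            rw [← Nat.cast_sub (by omega)]
          rw [this, ZMod.natCast_self]
          ring
        rw [he]
        rw [he2] at hi
        exact hi.2.symm
      · intro i _; ring
      · intro i _; ring
    have hpair : ∀ ρ1 ρ2, 1 ≤ ρ1 → 1 ≤ ρ2 → K ≤ ρ1 + ρ2 → ρ1 + ρ2 ≤ n + l - 2 →
        (ρ1 + ρ2 - K) % 2 = 0 → ρ1 ≤ ρ2 + (K-2) → ρ2 ≤ ρ1 + (K-2) → R ρ1 + R ρ2 ≤ n := by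
      intro ρ1 ρ2 h1 h2 h3 h4 h5 h6 h7
      obtain ⟨u, b, hu1, hu2, hb, he1, he2⟩ :
          ∃ u b, 1 ≤ u ∧ u + l + 1 ≤ n + 2 ∧ b ≤ l - 2 ∧ ρ1 = u + b ∧ ρ2 = (n - l + 2 - u) + b := by
        refine ⟨(ρ1 + (n - l + 2) - ρ2) / 2, (ρ1 + ρ2 - (n - l + 2)) / 2, ?_, ?_, ?_, ?_, ?_⟩ <;>
          omega
      set S1 := (Finset.univ : Finset (ZMod n)).filter
        (fun i => G.Adj (X i) (X (i + ((ρ1 : ℕ) : ZMod n)))) with hS1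
      set S2 := (Finset.univ : Finset (ZMod n)).filter
        (fun i => G.Adj (X i) (X (i + ((ρ2 : ℕ) : ZMod n)))) with hS2
      set S2' := S2.image (fun i => i - ((u:ℕ) : ZMod n)) with hS2'
      have hc2 : S2'.card = S2.card := Finset.card_image_of_injective _ (sub_left_injective)
      have hdisj : Disjoint S1 S2' := by
        rw [Finset.disjoint_left]
        intro i hi1 hi2
        rw [hS1, Finset.mem_filter] at hi1
        rw [hS2', Finset.mem_image] at hi2
        obtain ⟨j, hj, hji⟩ := hi2
        rw [hS2, Finset.mem_filter] at hj
        have hji' : j = i + ((u:ℕ) : ZMod n) := by rw [← hji]; ring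
        apply no_cycle_pair G hn hl3 (by omega) X hXinj hXadj hno u b hu1 hu2 hb i
        constructor
        · rw [← he1]; exact hi1.2
        · rw [show ((n - l + 2 - u) + b : ℕ) = ρ2 from he2.symm, show i + ((u:ℕ) : ZMod n) = j from hji'.symm]
          exact hj.2
      calc R ρ1 + R ρ2 = S1.card + S2'.card := by rw [hc2]
        _ = (S1 ∪ S2').card := (Finset.card_union_of_disjoint hdisj).symm
        _ ≤ (Finset.univ : Finset (ZMod n)).card := Finset.card_le_card (Finset.subset_univ _)
        _ = n := by rw [Finset.card_univ, ZMod.card]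
    -- total sum equals degree sum
    have hdeg_i : ∀ i : ZMod n,
        ((Finset.Ico 1 n).filter (fun ρ => G.Adj (X i) (X (i + ((ρ:ℕ) : ZMod n))))).card
          = G.degree (X i) := by
      intro i
      rw [← card_neighborFinset_eq_degree]
      set E := Equiv.ofBijective X hXbij with hE
      have hEX : ∀ z : ZMod n, E z = X z := fun z => rfl
      apply Finset.card_nbij' (fun ρ => X (i + ((ρ:ℕ) : ZMod n)))
        (fun w => ((E.symm w) - i).val)
      · intro ρ hρ
        rw [Finset.mem_coe, Finset.mem_filter] at hρ
        rw [Finset.mem_coe, mem_neighborFinset]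
        exact hρ.2
      · intro w hw
        rw [Finset.mem_coe, mem_neighborFinset] at hw
        beta_reduce
        rw [Finset.mem_coe, Finset.mem_filter, Finset.mem_Ico]
        have hEw : X (E.symm w) = w := E.apply_symm_apply w
        have hne : E.symm w - i ≠ 0 := by
          intro h
          have h2 : E.symm w = i := by
            have := sub_eq_zero.mp h
            exact this
          rw [h2] at hEw
          exact (G.ne_of_adj hw) hEw
        have hv0 : ((E.symm w - i).val) ≠ 0 := by
          intro h
          exact hne (by rwa [← ZMod.val_eq_zero])
        refine ⟨⟨by omega, hvlt _⟩, ?_⟩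
        have hcastv : (((E.symm w - i).val : ℕ) : ZMod n) = E.symm w - i :=
          ZMod.natCast_rightInverse _
        rw [hcastv, show i + (E.symm w - i) = E.symm w by ring, hEw]
        exact hw
      · intro ρ hρ
        rw [Finset.mem_coe, Finset.mem_filter, Finset.mem_Ico] at hρ
        beta_reduce
        have h1 : E.symm (X (i + ((ρ:ℕ):ZMod n))) = i + ((ρ:ℕ):ZMod n) := by
          rw [← hEX]
          exact E.symm_apply_apply _
        rw [h1, add_sub_cancel_left]
        exact ZMod.val_natCast_of_lt (by omega)
      · intro w hw
        have hcastv : (((E.symm w - i).val : ℕ) : ZMod n) = E.symm w - i :=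
          ZMod.natCast_rightInverse _
        beta_reduce
        rw [hcastv, show i + (E.symm w - i) = E.symm w by ring]
        exact E.apply_symm_apply w
    have hswap : ∑ ρ ∈ Finset.Ico 1 n, R ρ
        = ∑ i : ZMod n,
            ((Finset.Ico 1 n).filter (fun ρ => G.Adj (X i) (X (i + ((ρ:ℕ) : ZMod n))))).card := by
      simp only [hRdef, Finset.card_filter]
      exact Finset.sum_comm
    have hdegsum : ∑ i : ZMod n, G.degree (X i) = ∑ v : V, G.degree v :=
      Fintype.sum_bijective X hXbij _ _ (fun i => rfl)
    have hTbound : n * (n / 2 + 1) ≤ ∑ ρ ∈ Finset.Ico 1 n, R ρ := by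
      rw [hswap]
      calc n * (n/2+1) = ∑ _v : V, (n/2+1) := by
            rw [Finset.sum_const, Finset.card_univ, smul_eq_mul, ← hndef]
        _ ≤ ∑ v : V, G.degree v := Finset.sum_le_sum (fun v _ => hdeg v)
        _ = ∑ i : ZMod n, G.degree (X i) := hdegsum.symm
        _ = ∑ i : ZMod n,
            ((Finset.Ico 1 n).filter (fun ρ => G.Adj (X i) (X (i + ((ρ:ℕ) : ZMod n))))).card :=
            Finset.sum_congr rfl (fun i _ => (hdeg_i i).symm)
    have hcm := counting_main R hn hl3 (by omega) hK hRle hrefl hpair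
    have hbig : n * (n+1) ≤ 2 * ∑ ρ ∈ Finset.Ico 1 n, R ρ := by
      calc n * (n+1) ≤ n * (2*(n/2+1)) := Nat.mul_le_mul_left n (by omega)
        _ = 2 * (n * (n/2+1)) := by ring
        _ ≤ 2 * ∑ ρ ∈ Finset.Ico 1 n, R ρ := by omega
    have hcon : n * (n+1) ≤ n * n := le_trans hbig hcm
    have := Nat.le_of_mul_le_mul_left (by
      calc n * (n+1) ≤ n * n := hcon
      ) (show 0 < n by omega)
    omega
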